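/- arXiv:1606.02747 — 2 statements merged into one kernel-verified Lean document; each statement's English description precedes it below -/
import Mathlib

section
/- For all real x with |x| < 1 and real a, the hypergeometric series ₂F₁(a, a+1/2; 1/2; x²) = Σ_{n≥0} ((a)_n (a+1/2)_n / ((1/2)_n n!)) x^{2n} equals (1/2)[(1+x)^{-2a} + (1-x)^{-2a}]. -/
/-- Pochhammer (rising factorial) for real `a`. -/
noncomputable def poch (a : ℝ) (n : ℕ) : ℝ := (ascPochhammer ℝ n).eval a

lemma poch_zero (a : ℝ) : poch a 0 = 1 := by simp [poch]

lemma poch_succ (a : ℝ) (n : ℕ) : poch a (n + 1) = poch a n * (a + n) := by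
  simp [poch, ascPochhammer_succ_right]

lemma poch_pos {a : ℝ} (ha : 0 < a) (n : ℕ) : 0 < poch a n := by
  induction n with
  | zero => simp [poch_zero]
  | succ n ih => rw [poch_succ]; positivity

lemma abs_poch_le (c : ℝ) (n : ℕ) : |poch c n| ≤ poch (|c| + 1) n := by
  induction n with
  | zero => simp [poch_zero]
  | succ n ih =>
    rw [poch_succ, poch_succ, abs_mul]
    have h1 : |c + n| ≤ |c| + 1 + n := by
      calc |c + n| ≤ |c| + |(n : ℝ)| := abs_add_le _ _
        _ ≤ |c| + 1 + n := by rw [abs_of_nonneg (by positivity : (0:ℝ) ≤ n)]; linarith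
    have h2 : (0:ℝ) < poch (|c|+1) n := poch_pos (by positivity) n
    calc |poch c n| * |c + n| ≤ poch (|c|+1) n * (|c|+1+n) := by
          apply mul_le_mul ih h1 (abs_nonneg _) h2.le
      _ = _ := rfl

open Filter Topology

lemma aux_tendsto (b : ℝ) : Tendsto (fun n : ℕ => (b + n) / (n + 1)) atTop (𝓝 1) := by
  have h0 : Tendsto (fun n : ℕ => (b - 1) / (n + 1) + 1) atTop (𝓝 (0 + 1)) := by
    apply Tendsto.add_const
    have := tendsto_const_div_atTop_nhds_zero_nat (b - 1)
    exact this.comp (tendsto_add_atTop_nat 1) |>.congr (by intro n; simp)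
  rw [zero_add] at h0
  refine h0.congr (fun n => ?_)
  have : ((n : ℝ) + 1) ≠ 0 := by positivity
  field_simp
  ring

lemma summable_h {b r : ℝ} (hb : 0 < b) (hr0 : 0 < r) (hr1 : r < 1) :
    Summable (fun n : ℕ => poch b n / n.factorial * (n + 1) * r ^ n) := by
  have hpos : ∀ n : ℕ, 0 < poch b n / n.factorial * (n + 1) * r ^ n := by
    intro n
    have := poch_pos hb n
    have : (0:ℝ) < n.factorial := by positivity
    positivity
  apply summable_of_ratio_test_tendsto_lt_one hr1
  · exact Eventually.of_forall fun n => (hpos n).ne'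
  · have hratio : ∀ n : ℕ, ‖poch b (n+1) / ((n+1).factorial : ℝ) * (((n+1 : ℕ) : ℝ) + 1) * r ^ (n+1)‖ /
        ‖poch b n / n.factorial * (n + 1) * r ^ n‖
        = ((b + n) / (n + 1)) * (((2:ℝ) + n) / (n + 1)) * r := by
      intro n
      rw [Real.norm_eq_abs, Real.norm_eq_abs, abs_of_pos (hpos (n+1)), abs_of_pos (hpos n)]
      rw [poch_succ, Nat.factorial_succ, pow_succ]
      have h1 : (0:ℝ) < poch b n := poch_pos hb n
      have h2 : (0:ℝ) < n.factorial := by positivity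
      have h3 : ((n:ℝ) + 1) ≠ 0 := by positivity
      push_cast
      field_simp
      ring
    have := ((aux_tendsto b).mul (aux_tendsto 2)).mul_const r
    rw [one_mul, one_mul] at this
    exact Tendsto.congr (fun n => (hratio n).symm) this

lemma hasSum_binomial (c : ℝ) {y : ℝ} (hy : |y| < 1) :
    HasSum (fun n : ℕ => poch c n / n.factorial * y ^ n) ((1 - y) ^ (-c)) := by
  set b : ℝ := |c| + 1 with hbdef
  have hb : 0 < b := by positivity
  set r : ℝ := (1 + |y|) / 2 with hrdef
  have hr0 : 0 < r := by positivity
  have hr1 : r < 1 := by rw [hrdef]; linarith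
  have hyr : |y| < r := by rw [hrdef]; linarith
  have hS := summable_h hb hr0 hr1
  have hfac : ∀ n : ℕ, (0:ℝ) < n.factorial := fun n => by positivity
  have hpochb : ∀ n : ℕ, 0 < poch b n := poch_pos hb
  -- bound for |poch c n|/n!
  have hA : ∀ n : ℕ, |poch c n / n.factorial| ≤ poch b n / n.factorial := by
    intro n
    rw [abs_div, abs_of_pos (hfac n)]
    gcongr
    exact abs_poch_le c n
  -- summability of the series itself for |z| ≤ r
  have hsum_g : ∀ z : ℝ, |z| ≤ r → Summable (fun n : ℕ => poch c n / n.factorial * z ^ n) := by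
    intro z hz
    refine Summable.of_norm_bounded hS (fun n => ?_)
    rw [Real.norm_eq_abs, abs_mul, abs_pow]
    calc |poch c n / n.factorial| * |z| ^ n ≤ (poch b n / n.factorial) * r ^ n := by
            gcongr
            · exact (div_pos (hpochb n) (hfac n)).le
            · exact hA n
      _ ≤ poch b n / n.factorial * (n + 1) * r ^ n := by
            have h1 : (0:ℝ) < poch b n / n.factorial * r ^ n := by
              have := hpochb n; have := hfac n; positivity
            nlinarith [pow_pos hr0 n, div_pos (hpochb n) (hfac n), (Nat.cast_nonneg (α := ℝ) n)]
  -- derivative bounds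
  set u : ℕ → ℝ := fun n => (1/r) * (poch b n / n.factorial * (n + 1) * r ^ n) with hudef
  have hu : Summable u := hS.mul_left _
  have hg'le : ∀ (n : ℕ) (z : ℝ), |z| ≤ r → |poch c n / n.factorial * (n * z ^ (n-1))| ≤ u n := by
    intro n z hz
    cases n with
    | zero =>
      simp only [Nat.cast_zero, zero_mul, mul_zero, abs_zero]
      have := hpochb 0; have := hfac 0
      rw [hudef]
      positivity
    | succ k =>
      have hru : u (k+1) = poch b (k+1) / (k+1).factorial * ((k:ℝ)+2) * r^k := by
        rw [hudef]
        push_cast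
        field_simp
        ring
      rw [hru, abs_mul, abs_mul, abs_pow, Nat.cast_succ, Nat.add_sub_cancel]
      have h2 : |((k:ℝ)+1)| = (k:ℝ)+1 := abs_of_nonneg (by positivity)
      rw [h2]
      calc |poch c (k+1) / (k+1).factorial| * (((k:ℝ)+1) * |z| ^ k)
          ≤ (poch b (k+1) / (k+1).factorial) * (((k:ℝ)+2) * r ^ k) := by
            gcongr
            · exact (div_pos (hpochb (k+1)) (hfac (k+1))).le
            · exact hA (k+1)
            · linarith
        _ = poch b (k+1) / (k+1).factorial * ((k:ℝ)+2) * r^k := by ring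
  -- the sum function and its derivative
  have hder : ∀ z ∈ Set.Ioo (-r) r,
      HasDerivAt (fun t => ∑' n : ℕ, poch c n / n.factorial * t ^ n)
        (∑' n : ℕ, poch c n / n.factorial * (n * z ^ (n-1))) z := by
    intro z hz
    refine hasDerivAt_tsum_of_isPreconnected (g' := fun n t => poch c n / (n.factorial : ℝ) * (n * t ^ (n-1))) (y₀ := 0) hu isOpen_Ioo (convex_Ioo _ _).isPreconnected
      (fun n t _ => (hasDerivAt_pow n t).const_mul _) (fun n t ht => ?_) ?_ ?_ hz
    · have habs : |t| ≤ r := (abs_lt.mpr ⟨ht.1, ht.2⟩).le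
      simpa only [Real.norm_eq_abs] using hg'le n t habs
    · exact Set.mem_Ioo.mpr ⟨by linarith, hr0⟩
    · exact hsum_g 0 (by simp [abs_of_nonneg]; positivity)
  -- summability of derivative series
  have hsum_d : ∀ z : ℝ, |z| ≤ r → Summable (fun n : ℕ => poch c n / n.factorial * (n * z ^ (n-1))) := by
    intro z hz
    exact Summable.of_norm_bounded hu
      (fun n => by simpa only [Real.norm_eq_abs] using hg'le n z hz)
  -- the key ODE identity
  have hkey : ∀ z : ℝ, |z| ≤ r →
      (1 - z) * (∑' n : ℕ, poch c n / n.factorial * (n * z ^ (n-1)))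
        = c * ∑' n : ℕ, poch c n / n.factorial * z ^ n := by
    intro z hz
    have hD := hsum_d z hz
    have hfne : ∀ n : ℕ, ((n.factorial : ℝ)) ≠ 0 := fun n => (hfac n).ne'
    have hterm : ∀ n : ℕ, poch c (n+1) / ((n+1).factorial : ℝ) * (((n:ℝ)+1) * z ^ n)
        = (c + n) * (poch c n / n.factorial * z ^ n) := by
      intro n
      rw [poch_succ, Nat.factorial_succ]
      have h1 : ((n:ℝ)+1) ≠ 0 := by positivity
      push_cast
      field_simp
    have hS3 : Summable (fun n : ℕ => (c + n) * (poch c n / n.factorial * z ^ n)) := by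
      have h1 := (summable_nat_add_iff 1).mpr hD
      refine h1.congr (fun n => ?_)
      simpa [Nat.add_sub_cancel] using hterm n
    have hS4 : Summable (fun n : ℕ => (n:ℝ) * (poch c n / n.factorial * z ^ n)) := by
      have h1 := hD.mul_left z
      refine h1.congr (fun n => ?_)
      cases n with
      | zero => simp
      | succ k => rw [Nat.add_sub_cancel, pow_succ]; push_cast; ring
    have hre : (∑' n : ℕ, poch c n / n.factorial * (n * z ^ (n-1)))
        = ∑' n : ℕ, (c + n) * (poch c n / n.factorial * z ^ n) := by
      rw [Summable.tsum_eq_zero_add hD]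
      simp only [Nat.cast_zero, zero_mul, mul_zero, zero_add, Nat.add_sub_cancel]
      exact tsum_congr (fun n => by simpa [Nat.add_sub_cancel] using hterm n)
    have hzD : z * (∑' n : ℕ, poch c n / n.factorial * (n * z ^ (n-1)))
        = ∑' n : ℕ, (n:ℝ) * (poch c n / n.factorial * z ^ n) := by
      rw [← tsum_mul_left]
      refine tsum_congr (fun n => ?_)
      cases n with
      | zero => simp
      | succ k => rw [Nat.add_sub_cancel, pow_succ]; push_cast; ring
    have hsub : (1 - z) * (∑' n : ℕ, poch c n / n.factorial * (n * z ^ (n-1)))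
        = (∑' n : ℕ, (c + n) * (poch c n / n.factorial * z ^ n))
          - ∑' n : ℕ, (n:ℝ) * (poch c n / n.factorial * z ^ n) := by
      rw [sub_mul, one_mul, hzD]
      rw [hre]
    rw [hsub, ← Summable.tsum_sub hS3 hS4, ← tsum_mul_left]
    exact tsum_congr (fun n => by ring)
  -- membership facts
  have h0mem : (0:ℝ) ∈ Set.Ioo (-r) r := Set.mem_Ioo.mpr ⟨by linarith, hr0⟩
  have hymem : y ∈ Set.Ioo (-r) r := Set.mem_Ioo.mpr (abs_lt.mp hyr)
  -- the product function has zero derivative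
  have hphid : ∀ z ∈ Set.Ioo (-r) r,
      HasDerivAt (fun t : ℝ => (1 - t) ^ c * ∑' n : ℕ, poch c n / n.factorial * t ^ n) 0 z := by
    intro z hz
    have h1z : (0:ℝ) < 1 - z := by have := hz.2; simp only [Set.mem_Ioo] at hz; linarith [hz.2]
    have hbase : HasDerivAt (fun t : ℝ => 1 - t) (-1) z := (hasDerivAt_id z).const_sub 1
    have hrp : HasDerivAt (fun t : ℝ => (1 - t) ^ c) ((c * (1 - z) ^ (c - 1)) * (-1)) z :=
      (Real.hasDerivAt_rpow_const (p := c) (Or.inl h1z.ne')).comp z hbase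
    have hmul := hrp.mul (hder z hz)
    refine hmul.congr_deriv ?_
    have hkz := hkey z (abs_lt.mpr ⟨hz.1, hz.2⟩).le
    have hsplit : (1 - z) ^ c = (1 - z) ^ (c - 1) * (1 - z) := by
      nth_rewrite 1 [show c = c - 1 + 1 by ring]
      exact Real.rpow_add_one h1z.ne' (c - 1)
    rw [hsplit]
    linear_combination ((1 - z) ^ (c - 1)) * hkz
  -- constancy
  have hconst : (1 - y) ^ c * (∑' n : ℕ, poch c n / n.factorial * y ^ n)
      = (1 - (0:ℝ)) ^ c * ∑' n : ℕ, poch c n / n.factorial * (0:ℝ) ^ n := by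
    refine (convex_Ioo (-r) r).is_const_of_fderivWithin_eq_zero
      (fun z hz => ((hphid z hz).differentiableAt).differentiableWithinAt) ?_ hymem h0mem
    intro z hz
    rw [fderivWithin_of_isOpen isOpen_Ioo hz, (hphid z hz).hasFDerivAt.fderiv]
    ext t
    simp
  have hF0 : (∑' n : ℕ, poch c n / n.factorial * (0:ℝ) ^ n) = 1 := by
    rw [tsum_eq_single 0 (fun n hn => by simp [zero_pow hn])]
    simp [poch_zero]
  have h1y : (0:ℝ) < 1 - y := by have := (abs_lt.mp hy).2; linarith
  have hne : (1 - y) ^ c ≠ 0 := (Real.rpow_pos_of_pos h1y c).ne'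
  have hFy : (∑' n : ℕ, poch c n / n.factorial * y ^ n) = (1 - y) ^ (-c) := by
    rw [hF0, sub_zero, Real.one_rpow, mul_one] at hconst
    rw [Real.rpow_neg h1y.le]
    exact eq_inv_of_mul_eq_one_left (by linarith [hconst])
  exact (hsum_g y hyr.le).hasSum_iff.mpr hFy

lemma poch_two_mul (a : ℝ) (n : ℕ) :
    poch (2*a) (2*n) = 4^n * poch a n * poch (a + 1/2) n := by
  induction n with
  | zero => simp [poch_zero]
  | succ k ih =>
    rw [show 2*(k+1) = 2*k+1+1 from by ring, poch_succ, poch_succ, ih,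
      poch_succ, poch_succ]
    push_cast
    ring

lemma fact_two_mul (n : ℕ) :
    (((2*n).factorial : ℕ) : ℝ) = 4^n * poch (1/2) n * n.factorial := by
  induction n with
  | zero => simp [poch_zero]
  | succ k ih =>
    rw [show 2*(k+1) = 2*k+1+1 from by ring, Nat.factorial_succ, Nat.factorial_succ,
      Nat.cast_mul, Nat.cast_mul, ih, poch_succ, Nat.factorial_succ]
    push_cast
    ring

/-- Bailey: `₂F₁(a, a+1/2; 1/2; x²) = (1/2)[(1+x)^{-2a} + (1-x)^{-2a}]` for `|x| < 1`. -/
theorem stmt0 (a x : ℝ) (hx : |x| < 1) :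
    ∑' n : ℕ, poch a n * poch (a + 1/2) n / (poch (1/2) n * n.factorial) * x ^ (2 * n)
      = (1/2) * ((1 + x) ^ (-(2 * a)) + (1 - x) ^ (-(2 * a))) := by
  have hplus := hasSum_binomial (2*a) hx
  have hminus := hasSum_binomial (2*a) (y := -x) (by rwa [abs_neg])
  rw [sub_neg_eq_add] at hminus
  have hadd := hplus.add hminus
  have hinj : Function.Injective (fun k : ℕ => 2*k) := fun p q h => by simp only at h; omega
  have hvan : ∀ m ∉ Set.range (fun k : ℕ => 2*k),
      (poch (2*a) m / m.factorial * x ^ m + poch (2*a) m / m.factorial * (-x) ^ m) = 0 := by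
    intro m hm
    have hodd : Odd m := by
      rcases Nat.even_or_odd m with he | ho
      · exfalso; obtain ⟨k, hk⟩ := he; exact hm ⟨k, by simp only; omega⟩
      · exact ho
    rw [hodd.neg_pow]
    ring
  have heven := (Function.Injective.hasSum_iff hinj hvan).mpr hadd
  have hhalf := heven.mul_left (1/2 : ℝ)
  have hcongr : ∀ k : ℕ,
      (1/2 : ℝ) * ((fun m => poch (2*a) m / m.factorial * x ^ m
          + poch (2*a) m / m.factorial * (-x) ^ m) ∘ (fun k : ℕ => 2*k)) k
        = poch a k * poch (a + 1/2) k / (poch (1/2) k * k.factorial) * x ^ (2 * k) := by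
    intro k
    have hek : Even (2*k) := even_two_mul k
    simp only [Function.comp_apply, hek.neg_pow]
    rw [poch_two_mul, fact_two_mul]
    have h1 : (0:ℝ) < poch (1/2) k := poch_pos (by norm_num) k
    have h2 : (0:ℝ) < k.factorial := by positivity
    have h3 : (0:ℝ) < (4:ℝ)^k := by positivity
    field_simp
    ring
  have hfinal : HasSum
      (fun k : ℕ => poch a k * poch (a + 1/2) k / (poch (1/2) k * k.factorial) * x ^ (2 * k))
      (1/2 * ((1 - x) ^ (-(2*a)) + (1 + x) ^ (-(2*a)))) := (funext hcongr) ▸ hhalf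
  rw [hfinal.tsum_eq, add_comm ((1 - x) ^ (-(2*a)))]
end

section
/- For m ≤ n natural numbers and real d, the identity −(d)_m (d−1/2)_m / m! · (2d+2m−1)_{2n−2m+1} / (2n−2m+1)! = (1−2d) · (d)_n (d+1/2)_n / ((3/2)_n · n!) · (−n)_m (−n−1/2)_m / m! holds. -/
lemma poch_one (a : ℝ) : poch a 1 = a := by simp [poch]

lemma poch_succ_right (a : ℝ) (k : ℕ) : poch a (k + 1) = poch a k * (a + k) :=
  ascPochhammer_succ_eval k a

lemma poch_add (a : ℝ) (i j : ℕ) : poch a (i + j) = poch a i * poch (a + i) j := by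
  have := congrArg (Polynomial.eval a) (ascPochhammer_mul (S := ℝ) i j)
  simpa [poch, Polynomial.eval_mul, Polynomial.eval_comp] using this.symm

lemma poch_succ_left (a : ℝ) (k : ℕ) : poch a (k + 1) = a * poch (a + 1) k := by
  have := poch_add a 1 k
  rw [add_comm 1 k] at this
  simpa [poch_one] using this

lemma poch_neg (x : ℝ) : ∀ m : ℕ, poch (-x) m = (-1) ^ m * poch (x - m + 1) m := by
  intro m
  induction m with
  | zero => simp [poch_zero]
  | succ m ih =>
    rw [poch_succ_right, ih, poch_succ_left]
    have : x - (m + 1 : ℕ) + 1 + 1 = x - m + 1 := by push_cast; ring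
    rw [this]
    push_cast
    ring

lemma poch_dup (a : ℝ) : ∀ k : ℕ, poch (2 * a) (2 * k) = 4 ^ k * poch a k * poch (a + 1/2) k := by
  intro k
  induction k with
  | zero => simp [poch_zero]
  | succ k ih =>
    have h2 : 2 * (k + 1) = (2 * k + 1) + 1 := by ring
    rw [h2, poch_succ_right, poch_succ_right, ih, poch_succ_right, poch_succ_right]
    push_cast
    ring

lemma poch_nat_fac (k : ℕ) : poch 1 k = (k.factorial : ℝ) := by
  simpa [poch] using ascPochhammer_eval_one ℝ k

lemma fac_2k1 (k : ℕ) : ((2 * k + 1).factorial : ℝ) = 4 ^ k * k.factorial * poch (3/2) k := by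
  have h2 := poch_add 1 1 (2 * k)
  have h3 := poch_dup 1 k
  rw [poch_one] at h2
  norm_num at h2 h3
  rw [show ((2 * k + 1).factorial : ℝ) = poch 1 (2 * k + 1) from (poch_nat_fac _).symm,
    show 2 * k + 1 = 1 + 2 * k from by ring, h2, h3, poch_nat_fac]

lemma poch_fac_mul (k m : ℕ) : ((k + m).factorial : ℝ) = k.factorial * poch ((k : ℝ) + 1) m := by
  have := factorial_mul_ascPochhammer ℝ k m
  simp only [poch]
  push_cast at this ⊢
  rw [← this]

/-- `-(d)_m (d-1/2)_m / m! · (2d+2m-1)_{2n-2m+1} / (2n-2m+1)!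
  = (1-2d) (d)_n (d+1/2)_n / ((3/2)_n n!) · (-n)_m (-n-1/2)_m / m!` for `m ≤ n`. -/
theorem stmt8 (d : ℝ) (m n : ℕ) (h : m ≤ n) :
    -(poch d m * poch (d - 1/2) m / m.factorial)
        * (poch (2 * d + 2 * m - 1) (2 * n - 2 * m + 1) / (2 * n - 2 * m + 1).factorial)
      = (1 - 2 * d) * (poch d n * poch (d + 1/2) n / (poch (3/2) n * n.factorial))
        * (poch (-(n : ℝ)) m * poch (-(n : ℝ) - 1/2) m / m.factorial) := by
  obtain ⟨k, rfl⟩ : ∃ k, n = m + k := ⟨n - m, by omega⟩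
  have hidx : 2 * (m + k) - 2 * m + 1 = 2 * k + 1 := by omega
  rw [hidx]
  -- closed forms
  set A := poch d m with hA
  set B := poch (d - 1/2) m with hBdef
  set C := poch (d + m) k with hC
  set D := poch (d + m + 1/2) k with hD
  set E := poch (d + 1/2) m with hE
  set F := poch (3/2) k with hF
  set G := poch ((k : ℝ) + 3/2) m with hG
  set H := poch ((k : ℝ) + 1) m with hH
  have hdn : poch d (m + k) = A * C := by rw [hA, hC, poch_add]
  have hdn2 : poch (d + 1/2) (m + k) = E * D := by
    rw [hE, hD, poch_add]; ring_nf
  have hbig : poch (2 * d + 2 * m - 1) (2 * k + 1) = (2 * d + 2 * m - 1) * (4 ^ k * C * D) := by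
    rw [poch_succ_left]
    have e : 2 * d + 2 * (m : ℝ) - 1 + 1 = 2 * (d + m) := by ring
    rw [e, poch_dup, hC, hD]
  have hfac : ((2 * k + 1).factorial : ℝ) = 4 ^ k * k.factorial * F := fac_2k1 k
  have hnfac : (((m + k)).factorial : ℝ) = k.factorial * H := by
    rw [add_comm m k]; exact poch_fac_mul k m
  have h32 : poch (3/2) (m + k) = F * G := by
    rw [add_comm m k, poch_add, hF, hG]; ring_nf
  have hneg1 : poch (-((m + k : ℕ) : ℝ)) m = (-1) ^ m * H := by
    rw [poch_neg, hH]
    congr 2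
    push_cast; ring
  have hneg2 : poch (-((m + k : ℕ) : ℝ) - 1/2) m = (-1) ^ m * G := by
    have e : -(((m + k : ℕ) : ℝ)) - 1/2 = -((m : ℝ) + k + 1/2) := by push_cast; ring
    rw [e, poch_neg, hG]
    congr 2
    push_cast; ring
  have hB2 : B * (2 * d + 2 * m - 1) = (2 * d - 1) * E := by
    have h1 : poch (d - 1/2) (m + 1) = B * (d - 1/2 + m) := by
      rw [poch_succ_right, hBdef]
    have h2 : poch (d - 1/2) (m + 1) = (d - 1/2) * E := by
      rw [poch_succ_left, hE]; ring_nf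
    have := h1.symm.trans h2
    linear_combination 2 * this
  -- positivity / nonzeroness
  have hFpos : 0 < F := ascPochhammer_pos k (3/2 : ℝ) (by norm_num)
  have hGpos : 0 < G := ascPochhammer_pos m ((k : ℝ) + 3/2) (by positivity)
  have hHpos : 0 < H := ascPochhammer_pos m ((k : ℝ) + 1) (by positivity)
  have hm : (m.factorial : ℝ) ≠ 0 := by positivity
  have hk : (k.factorial : ℝ) ≠ 0 := by positivity
  rw [hdn, hdn2, hbig, hfac, hnfac, h32, hneg1, hneg2]
  have hHG : ((-1 : ℝ)) ^ m * H * ((-1 : ℝ) ^ m * G) = H * G := by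
    rw [mul_mul_mul_comm, ← mul_pow]; norm_num
  rw [hHG]
  field_simp
  linear_combination (-(A * C * D)) * hB2
end
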